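/- The function $r \mapsto \sqrt{r}\, C(r)$, where $C(r) = \left( \frac{4\pi}{3}\left(1 - \operatorname{sech}^6(r/2)\right) \right)^{-1/2}$, is strictly decreasing on the interval $(0, \operatorname{arcsinh}(1)]$. -/

import Mathlib

open Real

/-- Teo's function `C(r) = ((4π/3)(1 - sech⁶(r/2)))^{-1/2}`. -/
noncomputable def TeoC (r : ℝ) : ℝ :=
  (Real.sqrt (4 * π / 3 * (1 - (1 / Real.cosh (r / 2)) ^ 6)))⁻¹

section aux

/-- quartic upper bound for cosh on `[-1,1]` -/
lemma aux_cosh_le {x : ℝ} (hx : |x| ≤ 1) :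
    Real.cosh x ≤ 1 + x ^ 2 / 2 + 5 * x ^ 4 / 96 := by
  have h1 := Real.exp_bound hx (n := 4) (by norm_num)
  have hx' : |(-x)| ≤ 1 := by rwa [abs_neg]
  have h2 := Real.exp_bound hx' (n := 4) (by norm_num)
  rw [abs_sub_le_iff] at h1 h2
  have e1 : Real.exp x ≤ 1 + x + x ^ 2 / 2 + x ^ 3 / 6 + |x| ^ 4 * (5 / (24 * 4)) := by
    have := h1.1
    simp [Finset.sum_range_succ, Nat.factorial] at this ⊢
    nlinarith [this]
  have e2 : Real.exp (-x) ≤ 1 - x + x ^ 2 / 2 - x ^ 3 / 6 + |x| ^ 4 * (5 / (24 * 4)) := by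
    have := h2.1
    simp [Finset.sum_range_succ, Nat.factorial] at this ⊢
    nlinarith [this]
  have habs : |x| ^ 4 = x ^ 4 := by
    rw [← abs_pow, abs_of_nonneg (by positivity)]
  rw [Real.cosh_eq]
  rw [habs] at e1 e2
  nlinarith [e1, e2]

/-- lower bound for sinh at 0.9 -/
lemma aux_one_le_sinh : (1 : ℝ) ≤ Real.sinh 0.9 := by
  have h1 : (∑ i ∈ Finset.range 5, (0.9:ℝ) ^ i / i.factorial) ≤ Real.exp 0.9 :=
    Real.sum_le_exp_of_nonneg (by norm_num) 5
  have hx : |(-0.9 : ℝ)| ≤ 1 := by rw [abs_neg]; norm_num [abs_of_nonneg]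
  have h2 := Real.exp_bound hx (n := 4) (by norm_num)
  rw [abs_sub_le_iff] at h2
  have e2 : Real.exp (-0.9) ≤ 0.42 := by
    have := h2.1
    simp [Finset.sum_range_succ, Nat.factorial] at this
    rw [show |(0.9 : ℝ)| = 0.9 from abs_of_nonneg (by norm_num)] at this
    norm_num at this ⊢
    linarith [this]
  have e1 : (2.45 : ℝ) ≤ Real.exp 0.9 := by
    refine le_trans ?_ h1
    simp [Finset.sum_range_succ, Nat.factorial]
    norm_num
  rw [Real.sinh_eq]
  nlinarith [e1, e2]

lemma aux_arsinh_le : Real.arsinh 1 ≤ 0.9 := by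
  have := Real.arsinh_le_arsinh.2 aux_one_le_sinh
  rwa [Real.arsinh_sinh] at this

lemma aux_pow7 {a : ℝ} (ha0 : 0 ≤ a) (ha : a ≤ 0.104)
    (h3 : a ^ 3 ≤ 0.104 * a ^ 2) (h4 : a ^ 4 ≤ 0.104 * a ^ 3)
    (h5 : a ^ 5 ≤ 0.104 * a ^ 4) (h6 : a ^ 6 ≤ 0.104 * a ^ 5)
    (h7 : a ^ 7 ≤ 0.104 * a ^ 6) : (1 + a) ^ 7 ≤ 1 + 7 * a + 26 * a ^ 2 := by
  nlinarith [h3, h4, h5, h6, h7, sq_nonneg a]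

/-- polynomial inequality -/
lemma aux_poly {t : ℝ} (h0 : 0 < t) (h1 : t ≤ 0.2025) :
    (1 + t / 2 + 5 * t ^ 2 / 96) ^ 7 < 1 + 6 * t := by
  obtain ⟨a, ha_def⟩ : ∃ a : ℝ, a = t / 2 + 5 * t ^ 2 / 96 := ⟨_, rfl⟩
  have ha0 : 0 ≤ a := by rw [ha_def]; positivity
  have ha : a ≤ 0.104 := by rw [ha_def]; nlinarith
  have h3 : a ^ 3 ≤ 0.104 * a ^ 2 := by nlinarith [sq_nonneg a]
  have h4 : a ^ 4 ≤ 0.104 * a ^ 3 := by nlinarith [pow_nonneg ha0 3]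
  have h5 : a ^ 5 ≤ 0.104 * a ^ 4 := by nlinarith [pow_nonneg ha0 4]
  have h6 : a ^ 6 ≤ 0.104 * a ^ 5 := by nlinarith [pow_nonneg ha0 5]
  have h7 : a ^ 7 ≤ 0.104 * a ^ 6 := by nlinarith [pow_nonneg ha0 6]
  have step1 : (1 + a) ^ 7 ≤ 1 + 7 * a + 26 * a ^ 2 := aux_pow7 ha0 ha h3 h4 h5 h6 h7
  have step2 : 1 + 7 * a + 26 * a ^ 2 < 1 + 6 * t := by
    rw [ha_def]; nlinarith
  calc (1 + t / 2 + 5 * t ^ 2 / 96) ^ 7 = (1 + a) ^ 7 := by rw [ha_def]; ring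
    _ ≤ 1 + 7 * a + 26 * a ^ 2 := step1
    _ < 1 + 6 * t := step2

/-- key inequality -/
lemma aux_key {u : ℝ} (hu0 : 0 < u) (hu : u ≤ 0.45) :
    Real.cosh u ^ 7 - Real.cosh u < 6 * u * Real.sinh u := by
  have habs : |u| ≤ 1 := by rw [abs_of_pos hu0]; linarith
  have hc := aux_cosh_le habs
  have h1 : (1 : ℝ) ≤ Real.cosh u := Real.one_le_cosh u
  have hs : u < Real.sinh u := Real.self_lt_sinh_iff.2 hu0
  have hp : Real.cosh u ^ 7 ≤ (1 + u ^ 2 / 2 + 5 * u ^ 4 / 96) ^ 7 :=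
    pow_le_pow_left₀ (by positivity) hc 7
  have ht0 : 0 < u ^ 2 := by positivity
  have ht1 : u ^ 2 ≤ 0.2025 := by nlinarith
  have hpoly := aux_poly ht0 ht1
  have h6 : 6 * u * u < 6 * u * Real.sinh u := by
    apply mul_lt_mul_of_pos_left hs (by linarith)
  have : (1 + u ^ 2 / 2 + 5 * (u ^ 2) ^ 2 / 96) ^ 7 < 1 + 6 * u ^ 2 := hpoly
  nlinarith [this, hp, h6]

lemma aux_D_pos {r : ℝ} (hr : 0 < r) : 0 < 1 - (1 / Real.cosh (r / 2)) ^ 6 := by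
  have h1 : 1 < Real.cosh (r / 2) := Real.one_lt_cosh.2 (by positivity)
  have h2 : 1 / Real.cosh (r / 2) < 1 := by
    rw [div_lt_one (by linarith)]; exact h1
  have h3 : 0 ≤ 1 / Real.cosh (r / 2) := by positivity
  have := pow_lt_one₀ h3 h2 (n := 6) (by norm_num)
  linarith

/-- the ratio function is strictly decreasing -/
lemma aux_ratio_anti :
    StrictAntiOn (fun r : ℝ => r / (1 - (1 / Real.cosh (r / 2)) ^ 6))
      (Set.Ioc 0 (Real.arsinh 1)) := by
  have hcont : Continuous fun r : ℝ => 1 - (1 / Real.cosh (r / 2)) ^ 6 := by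
    apply continuous_const.sub
    apply Continuous.pow
    exact continuous_const.div (Real.continuous_cosh.comp (continuous_id.div_const 2))
      (fun x => (Real.cosh_pos _).ne')
  apply strictAntiOn_of_deriv_neg (convex_Ioc _ _)
  · exact ContinuousOn.div continuousOn_id hcont.continuousOn
      (fun x hx => (aux_D_pos hx.1).ne')
  · intro x hx
    rw [interior_Ioc] at hx
    obtain ⟨hx0, hxε⟩ := hx
    have hx09 : x ≤ 0.9 := hxε.le.trans aux_arsinh_le
    set c := Real.cosh (x / 2) with hc_def
    set s := Real.sinh (x / 2) with hs_def
    have hcpos : 0 < c := Real.cosh_pos _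
    have hc1 : 1 < c := Real.one_lt_cosh.2 (by positivity)
    -- derivative computation
    have h2 : HasDerivAt (fun r : ℝ => r / 2) (1 / 2) x := (hasDerivAt_id x).div_const 2
    have hcosh : HasDerivAt (fun r : ℝ => Real.cosh (r / 2)) (s * (1 / 2)) x :=
      by have := (Real.hasDerivAt_cosh (x / 2)).comp x h2; exact this
    have hinv : HasDerivAt (fun r : ℝ => (Real.cosh (r / 2))⁻¹)
        (-(s * (1 / 2)) / c ^ 2) x := hcosh.inv hcpos.ne'
    have hpow : HasDerivAt (fun r : ℝ => ((Real.cosh (r / 2))⁻¹) ^ 6)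
        (6 * (c⁻¹) ^ 5 * (-(s * (1 / 2)) / c ^ 2)) x := by
      have := hinv.pow 6
      have e : ((6:ℕ):ℝ) * (Real.cosh (x / 2))⁻¹ ^ (6 - 1) * (-(s * (1 / 2)) / c ^ 2)
          = 6 * (c⁻¹) ^ 5 * (-(s * (1 / 2)) / c ^ 2) := by norm_num [← hc_def]
      rw [e] at this
      exact this
    have hD : HasDerivAt (fun r : ℝ => 1 - (1 / Real.cosh (r / 2)) ^ 6)
        (0 - 6 * (c⁻¹) ^ 5 * (-(s * (1 / 2)) / c ^ 2)) x := by
      have := (hasDerivAt_const x (1:ℝ)).sub hpow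
      simp only [one_div] at this ⊢
      exact this
    have hDx : (0:ℝ) < 1 - (1 / Real.cosh (x / 2)) ^ 6 := aux_D_pos hx0
    have hg : HasDerivAt (fun r : ℝ => r / (1 - (1 / Real.cosh (r / 2)) ^ 6))
        ((1 * (1 - (1 / Real.cosh (x / 2)) ^ 6) -
          x * (0 - 6 * (c⁻¹) ^ 5 * (-(s * (1 / 2)) / c ^ 2))) /
          (1 - (1 / Real.cosh (x / 2)) ^ 6) ^ 2) x :=
      (hasDerivAt_id x).div hD hDx.ne'
    rw [hg.deriv]
    apply div_neg_of_neg_of_pos _ (by positivity)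
    -- numerator negative
    have key : c ^ 7 - c < 6 * (x / 2) * s := aux_key (by positivity) (by linarith)
    have hnum : (1 * (1 - (1 / Real.cosh (x / 2)) ^ 6) -
          x * (0 - 6 * (c⁻¹) ^ 5 * (-(s * (1 / 2)) / c ^ 2)))
        = (c ^ 7 - c - 6 * (x / 2) * s) / c ^ 7 := by
      rw [← hc_def]
      field_simp
      ring
    rw [hnum]
    apply div_neg_of_neg_of_pos (by linarith) (by positivity)

lemma aux_f_eq {r : ℝ} (hr : 0 < r) :
    Real.sqrt r * TeoC r =
      Real.sqrt (r / (4 * π / 3 * (1 - (1 / Real.cosh (r / 2)) ^ 6))) := by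
  unfold TeoC
  rw [← Real.sqrt_inv, ← Real.sqrt_mul hr.le, ← div_eq_mul_inv]

end aux

/-- `√r · C(r)` is strictly decreasing on `(0, arcsinh 1]`. -/
theorem sqrt_mul_TeoC_strictAnti :
    StrictAntiOn (fun r : ℝ => Real.sqrt r * TeoC r) (Set.Ioc 0 (Real.arsinh 1)) := by
  intro a ha b hb hab
  have ha0 : 0 < a := ha.1
  have hb0 : 0 < b := hb.1
  have hDa : 0 < 1 - (1 / Real.cosh (a / 2)) ^ 6 := aux_D_pos ha0
  have hDb : 0 < 1 - (1 / Real.cosh (b / 2)) ^ 6 := aux_D_pos hb0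
  have hπ : (0:ℝ) < 4 * π / 3 := by positivity
  simp only
  rw [aux_f_eq ha0, aux_f_eq hb0]
  apply Real.sqrt_lt_sqrt (by positivity)
  have hratio := aux_ratio_anti ha hb hab
  simp only at hratio
  rw [div_lt_div_iff₀ (by positivity) (by positivity)]
  rw [div_lt_div_iff₀ hDb hDa] at hratio
  nlinarith [mul_lt_mul_of_pos_left hratio hπ]
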